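/- Let U ⊆ ℂ be open and let a, b, μ : U → ℂ be holomorphic with μ(w) ≠ 0 and 1 − a(w)·conj(b(w)) ≠ 0 for all w ∈ U. Set λ² = 4·|μ|²·|1 − a·conj(b)|² and define K = −Δ(ln λ)/λ², where Δ = ∂²/∂u² + ∂²/∂v² is the Euclidean Laplacian on U. Then at every w ∈ U: K = Re( a′(w)·conj(b′(w))·(1 − conj(a(w))·b(w))² ) / ( |μ(w)|²·(1 − a(w)·conj(b(w)))³·(1 − conj(a(w))·b(w))³ ), where a′, b′ denote the complex derivatives of a, b (the denominator is the positive real number |μ|²·|1 − a·conj(b)|⁶). -/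

import Mathlib

open ComplexConjugate

/-- The Euclidean Laplacian `Δg = ∂²g/∂u² + ∂²g/∂v²` of `g : ℂ → ℝ`. -/
noncomputable def lapC (g : ℂ → ℝ) (w : ℂ) : ℝ :=
  fderiv ℝ (fun z => fderiv ℝ g z 1) w 1 +
    fderiv ℝ (fun z => fderiv ℝ g z Complex.I) w Complex.I

noncomputable def mulCLM (c : ℂ) : ℂ →L[ℝ] ℂ :=
  ContinuousLinearMap.restrictScalars ℝ (ContinuousLinearMap.smulRight (1 : ℂ →L[ℂ] ℂ) c)

@[simp] lemma mulCLM_apply (c v : ℂ) : mulCLM c v = v * c := by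
  simp [mulCLM, smul_eq_mul]

noncomputable def conjL : ℂ →L[ℝ] ℂ := Complex.conjCLE.toContinuousLinearMap

@[simp] lemma conjL_apply (v : ℂ) : conjL v = conj v := rfl

lemma HasDerivAt.mulCLM' {f : ℂ → ℂ} {f' z : ℂ} (h : HasDerivAt f f' z) :
    HasFDerivAt f (mulCLM f') z := h.hasFDerivAt.restrictScalars ℝ

lemma hasFDerivAt_conjf {f : ℂ → ℂ} {f' z : ℂ} (h : HasDerivAt f f' z) :
    HasFDerivAt (fun y => conj (f y)) (conjL.comp (mulCLM f')) z :=
  conjL.hasFDerivAt.comp z h.mulCLM'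

lemma hasFDerivAt_finv {f : ℂ → ℂ} {f' : ℂ →L[ℝ] ℂ} {z : ℂ}
    (hf : HasFDerivAt f f' z) (h0 : f z ≠ 0) :
    HasFDerivAt (fun y => (f y)⁻¹) ((mulCLM (-(f z ^ 2)⁻¹)).comp f') z :=
  ((hasDerivAt_inv h0).hasFDerivAt.restrictScalars ℝ).comp z hf

set_option maxHeartbeats 4000000 in
theorem lap_eval (U : Set ℂ) (hU : IsOpen U)
    (a b μ : ℂ → ℂ)
    (ha : DifferentiableOn ℂ a U) (hb : DifferentiableOn ℂ b U) (hμ : DifferentiableOn ℂ μ U)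
    (hμ0 : ∀ w ∈ U, μ w ≠ 0) (hab : ∀ w ∈ U, 1 - a w * conj (b w) ≠ 0)
    (lam : ℂ → ℝ)
    (hlamsq : ∀ w, lam w ^ 2
      = 4 * ‖μ w‖ ^ 2 * ‖1 - a w * conj (b w)‖ ^ 2)
    (hlampos : ∀ w ∈ U, 0 < lam w)
    (w : ℂ) (hw : w ∈ U) :
    lapC (fun z => Real.log (lam z)) w
      = (-(4:ℂ) * deriv a w * conj (deriv b w)
          / (1 - a w * conj (b w)) ^ 2).re := by
  classical
  set F : ℂ → ℂ := fun z => 1 - a z * conj (b z) with hF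
  have hFw : F w ≠ 0 := hab w hw
  have hFne : ∀ z ∈ U, F z ≠ 0 := hab
  have hμw : μ w ≠ 0 := hμ0 w hw
  -- rotation constants
  set c : ℂ := (‖F w‖ : ℂ) / F w with hc
  set d : ℂ := (‖μ w‖ : ℂ) / μ w with hd
  have habsc : ‖c‖ = 1 := by
    simp [hc, norm_div, Complex.norm_real, abs_of_nonneg (norm_nonneg _),
      div_self (norm_ne_zero_iff.mpr hFw)]
  have habsd : ‖d‖ = 1 := by
    simp [hd, norm_div, Complex.norm_real, abs_of_nonneg (norm_nonneg _),
      div_self (norm_ne_zero_iff.mpr hμw)]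
  have hc0 : c ≠ 0 := by
    intro h; rw [h] at habsc; simp at habsc
  have hd0 : d ≠ 0 := by
    intro h; rw [h] at habsd; simp at habsd
  have hcFw : c * F w = (‖F w‖ : ℂ) := by
    rw [hc]; field_simp
  have hdμw : d * μ w = (‖μ w‖ : ℂ) := by
    rw [hd]; field_simp
  clear_value F c d
  -- continuity
  have hacont : ContinuousOn a U := ha.continuousOn
  have hbcont : ContinuousOn b U := hb.continuousOn
  have hFcont : ContinuousOn F U := by
    rw [hF]
    apply continuousOn_const.sub
    exact hacont.mul (Complex.continuous_conj.comp_continuousOn hbcont)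
  have hμcont : ContinuousOn μ U := hμ.continuousOn
  -- the neighborhood V
  set V : Set ℂ := (U ∩ (fun z => d * μ z) ⁻¹' Complex.slitPlane)
      ∩ ((fun z => c * F z) ⁻¹' Complex.slitPlane) with hV
  have hV1open : IsOpen (U ∩ (fun z => d * μ z) ⁻¹' Complex.slitPlane) :=
    (continuousOn_const.mul hμcont).isOpen_inter_preimage hU Complex.isOpen_slitPlane
  have hVopen : IsOpen V := by
    have hsub : (U ∩ (fun z => d * μ z) ⁻¹' Complex.slitPlane) ⊆ U := Set.inter_subset_left
    exact ContinuousOn.isOpen_inter_preimage (f := fun z => c * F z)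
      ((continuousOn_const.mul hFcont).mono hsub) hV1open Complex.isOpen_slitPlane
  have hwV : w ∈ V := by
    refine ⟨⟨hw, ?_⟩, ?_⟩
    · show d * μ w ∈ Complex.slitPlane
      rw [hdμw]; exact Complex.ofReal_mem_slitPlane.2 (norm_pos_iff.mpr hμw)
    · show c * F w ∈ Complex.slitPlane
      rw [hcFw]; exact Complex.ofReal_mem_slitPlane.2 (norm_pos_iff.mpr hFw)
  have hVU : V ⊆ U := fun z hz => hz.1.1
  have hVμslit : ∀ z ∈ V, d * μ z ∈ Complex.slitPlane := fun z hz => hz.1.2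
  have hVFslit : ∀ z ∈ V, c * F z ∈ Complex.slitPlane := fun z hz => hz.2
  -- local expression G
  set G : ℂ → ℝ := fun z => Real.log 2
      + ((Complex.log (d * μ z)).re + (Complex.log (c * F z)).re) with hG
  have heq : ∀ z ∈ V, Real.log (lam z) = G z := by
    intro z hz
    have hzU : z ∈ U := hVU hz
    have hμz : μ z ≠ 0 := hμ0 z hzU
    have hFz : F z ≠ 0 := hFne z hzU
    have haμ : (0:ℝ) < ‖μ z‖ := norm_pos_iff.mpr hμz
    have haF : (0:ℝ) < ‖F z‖ := norm_pos_iff.mpr hFz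
    have hlam : lam z = 2 * ‖μ z‖ * ‖F z‖ := by
      have h1 : lam z = Real.sqrt (lam z ^ 2) :=
        (Real.sqrt_sq (hlampos z hzU).le).symm
      rw [h1, hlamsq z]
      have : 4 * ‖μ z‖ ^ 2 * ‖1 - a z * conj (b z)‖ ^ 2
          = (2 * ‖μ z‖ * ‖F z‖) ^ 2 := by rw [hF]; ring
      rw [this, Real.sqrt_sq (by positivity)]
    have h2 : Real.log (2 * ‖μ z‖ * ‖F z‖)
        = Real.log 2 + (Real.log (‖μ z‖) + Real.log (‖F z‖)) := by
      rw [Real.log_mul (by positivity) (by positivity),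
        Real.log_mul (by norm_num) (by positivity)]
      ring
    rw [hlam, h2]
    show _ = Real.log 2 + ((Complex.log (d * μ z)).re + (Complex.log (c * F z)).re)
    rw [Complex.log_re, Complex.log_re, norm_mul, norm_mul, habsd, habsc, one_mul, one_mul]
  -- differentiability of the basic pieces on V
  have hAz : ∀ z ∈ V, HasDerivAt a (deriv a z) z := fun z hz =>
    (ha.differentiableAt (hU.mem_nhds (hVU hz))).hasDerivAt
  have hBz : ∀ z ∈ V, HasDerivAt b (deriv b z) z := fun z hz =>
    (hb.differentiableAt (hU.mem_nhds (hVU hz))).hasDerivAt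
  have hMz : ∀ z ∈ V, HasDerivAt μ (deriv μ z) z := fun z hz =>
    (hμ.differentiableAt (hU.mem_nhds (hVU hz))).hasDerivAt
  -- derivative of F
  have hFder : ∀ z ∈ V, HasFDerivAt F
      (-(a z • (conjL.comp (mulCLM (deriv b z))) + conj (b z) • mulCLM (deriv a z))) z := by
    intro z hz
    rw [hF]
    exact ((hAz z hz).mulCLM'.mul (hasFDerivAt_conjf (hBz z hz))).const_sub 1
  -- the clean first-derivative functions
  set PC : ℂ → ℂ := fun z => deriv μ z * (μ z)⁻¹
      - (deriv a z * conj (b z) + a z * conj (deriv b z)) * (F z)⁻¹ with hPC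
  set QC : ℂ → ℂ := fun z => deriv μ z * Complex.I * (μ z)⁻¹
      + (Complex.I * (a z * conj (deriv b z) - deriv a z * conj (b z))) * (F z)⁻¹ with hQC
  have hfderiv_loglam : ∀ z ∈ V,
      fderiv ℝ (fun y => Real.log (lam y)) z 1 = (PC z).re
      ∧ fderiv ℝ (fun y => Real.log (lam y)) z Complex.I = (QC z).re := by
    intro z hz
    have hzU : z ∈ U := hVU hz
    have hμz : μ z ≠ 0 := hμ0 z hzU
    have hFz : F z ≠ 0 := hFne z hzU
    -- log (d * μ z)
    have hdμ : HasDerivAt (fun y => d * μ y) (d * deriv μ z) z := (hMz z hz).const_mul d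
    have hlog1 : HasFDerivAt (fun y => Complex.log (d * μ y))
        ((mulCLM ((d * μ z)⁻¹)).comp (mulCLM (d * deriv μ z))) z :=
      HasFDerivAt.comp (g := Complex.log) z ((Complex.hasDerivAt_log (hVμslit z hz)).hasFDerivAt.restrictScalars ℝ)
        hdμ.mulCLM'
    -- log (c * F z)
    have hcF : HasFDerivAt (fun y => c * F y)
        (c • -(a z • (conjL.comp (mulCLM (deriv b z))) + conj (b z) • mulCLM (deriv a z))) z :=
      (hFder z hz).const_mul c
    have hlog2 : HasFDerivAt (fun y => Complex.log (c * F y))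
        ((mulCLM ((c * F z)⁻¹)).comp
          (c • -(a z • (conjL.comp (mulCLM (deriv b z))) + conj (b z) • mulCLM (deriv a z)))) z :=
      HasFDerivAt.comp (g := Complex.log) z ((Complex.hasDerivAt_log (hVFslit z hz)).hasFDerivAt.restrictScalars ℝ) hcF
    have hGd : HasFDerivAt G
        (Complex.reCLM.comp ((mulCLM ((d * μ z)⁻¹)).comp (mulCLM (d * deriv μ z)))
          + Complex.reCLM.comp ((mulCLM ((c * F z)⁻¹)).comp
            (c • -(a z • (conjL.comp (mulCLM (deriv b z))) + conj (b z) • mulCLM (deriv a z))))) z := by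
      have := ((Complex.reCLM.hasFDerivAt.comp z hlog1).add
        (Complex.reCLM.hasFDerivAt.comp z hlog2)).const_add (Real.log 2)
      exact this
    have hfe : fderiv ℝ (fun y => Real.log (lam y)) z = fderiv ℝ G z := by
      apply Filter.EventuallyEq.fderiv_eq
      exact Filter.eventuallyEq_of_mem (hVopen.mem_nhds hz) heq
    rw [hfe, hGd.fderiv]
    constructor
    · simp only [ContinuousLinearMap.add_apply, ContinuousLinearMap.comp_apply,
        ContinuousLinearMap.smul_apply, ContinuousLinearMap.neg_apply,
        mulCLM_apply, conjL_apply, Complex.reCLM_apply, smul_eq_mul, one_mul]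
      rw [← Complex.add_re]
      congr 1
      simp only [hPC]
      field_simp [hc0, hd0, hμz, hFz]
      ring
    · simp only [ContinuousLinearMap.add_apply, ContinuousLinearMap.comp_apply,
        ContinuousLinearMap.smul_apply, ContinuousLinearMap.neg_apply,
        mulCLM_apply, conjL_apply, Complex.reCLM_apply, smul_eq_mul]
      rw [← Complex.add_re]
      congr 1
      rw [map_mul, Complex.conj_I]
      simp only [hQC]
      field_simp [hc0, hd0, hμz, hFz]
      ring
  -- second derivatives via analyticity
  have haU : AnalyticOnNhd ℂ a U := ha.analyticOnNhd hU
  have hbU : AnalyticOnNhd ℂ b U := hb.analyticOnNhd hU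
  have hμU : AnalyticOnNhd ℂ μ U := hμ.analyticOnNhd hU
  have hA : HasDerivAt a (deriv a w) w := hAz w hwV
  have hB : HasDerivAt b (deriv b w) w := hBz w hwV
  have hM : HasDerivAt μ (deriv μ w) w := hMz w hwV
  have hA' : HasDerivAt (deriv a) (deriv (deriv a) w) w :=
    ((haU.deriv w hw).differentiableAt).hasDerivAt
  have hB' : HasDerivAt (deriv b) (deriv (deriv b) w) w :=
    ((hbU.deriv w hw).differentiableAt).hasDerivAt
  have hM' : HasDerivAt (deriv μ) (deriv (deriv μ) w) w :=
    ((hμU.deriv w hw).differentiableAt).hasDerivAt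
  have hFDw : HasFDerivAt F
      (-(a w • (conjL.comp (mulCLM (deriv b w))) + conj (b w) • mulCLM (deriv a w))) w :=
    hFder w hwV
  -- derivative of PC at w
  have hPCd := (hM'.mulCLM'.mul (hasFDerivAt_finv hM.mulCLM' hμw)).sub
    (((hA'.mulCLM'.mul (hasFDerivAt_conjf hB)).add
      (hA.mulCLM'.mul (hasFDerivAt_conjf hB'))).mul (hasFDerivAt_finv hFDw hFw))
  -- derivative of QC at w
  have hQCd := ((hM'.mul_const Complex.I).mulCLM'.mul (hasFDerivAt_finv hM.mulCLM' hμw)).add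
    ((((hA.mulCLM'.mul (hasFDerivAt_conjf hB')).sub
      (hA'.mulCLM'.mul (hasFDerivAt_conjf hB))).const_mul Complex.I).mul
        (hasFDerivAt_finv hFDw hFw))
  have h1 := (Complex.reCLM.hasFDerivAt.comp w hPCd).fderiv
  have h2 := (Complex.reCLM.hasFDerivAt.comp w hQCd).fderiv
  have hEv1 : (fun z => fderiv ℝ (fun y => Real.log (lam y)) z 1)
      =ᶠ[nhds w] fun z => (PC z).re :=
    Filter.eventuallyEq_of_mem (hVopen.mem_nhds hwV) (fun z hz => (hfderiv_loglam z hz).1)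
  have hEvI : (fun z => fderiv ℝ (fun y => Real.log (lam y)) z Complex.I)
      =ᶠ[nhds w] fun z => (QC z).re :=
    Filter.eventuallyEq_of_mem (hVopen.mem_nhds hwV) (fun z hz => (hfderiv_loglam z hz).2)
  have hlap : lapC (fun z => Real.log (lam z)) w
      = fderiv ℝ (fun z => (PC z).re) w 1 + fderiv ℝ (fun z => (QC z).re) w Complex.I := by
    rw [lapC, hEv1.fderiv_eq, hEvI.fderiv_eq]
  rw [hlap,
    show fderiv ℝ (fun z => (PC z).re) w = _ from h1,
    show fderiv ℝ (fun z => (QC z).re) w = _ from h2]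
  simp only [ContinuousLinearMap.coe_comp', Function.comp_apply,
    ContinuousLinearMap.add_apply, ContinuousLinearMap.comp_apply,
    ContinuousLinearMap.smul_apply, ContinuousLinearMap.neg_apply,
    ContinuousLinearMap.coe_sub', Pi.sub_apply, Pi.add_apply,
    mulCLM_apply, conjL_apply, Complex.reCLM_apply, smul_eq_mul, one_mul,
    map_mul, Complex.conj_I, Pi.mul_apply]
  rw [← Complex.add_re]
  congr 1
  have hFw' : (1:ℂ) - a w * conj (b w) ≠ 0 := by rw [hF] at hFw; exact hFw
  simp only [hF]
  field_simp [hμw, hFw']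
  ring_nf
  simp only [Complex.I_sq]
  ring

theorem stmt8 (U : Set ℂ) (hU : IsOpen U)
    (a b μ : ℂ → ℂ)
    (ha : DifferentiableOn ℂ a U) (hb : DifferentiableOn ℂ b U) (hμ : DifferentiableOn ℂ μ U)
    (hμ0 : ∀ w ∈ U, μ w ≠ 0) (hab : ∀ w ∈ U, 1 - a w * conj (b w) ≠ 0)
    (lam : ℂ → ℝ)
    (hlamsq : ∀ w, lam w ^ 2
      = 4 * ‖μ w‖ ^ 2 * ‖1 - a w * conj (b w)‖ ^ 2)
    (hlampos : ∀ w ∈ U, 0 < lam w)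
    (K : ℂ → ℝ)
    (hK : ∀ w, K w = -(lapC (fun z => Real.log (lam z)) w) / lam w ^ 2) :
    ∀ w ∈ U, (K w : ℂ) =
      (((deriv a w * conj (deriv b w) * (1 - conj (a w) * b w) ^ 2).re : ℝ) : ℂ) /
        ((μ w * conj (μ w)) * (1 - a w * conj (b w)) ^ 3 * (1 - conj (a w) * b w) ^ 3) := by
  intro w hw
  have hL := lap_eval U hU a b μ ha hb hμ hμ0 hab lam hlamsq hlampos w hw
  have hFw : (1:ℂ) - a w * conj (b w) ≠ 0 := hab w hw
  have hμw : μ w ≠ 0 := hμ0 w hw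
  have hconjF : conj ((1:ℂ) - a w * conj (b w)) = 1 - conj (a w) * b w := by
    simp [map_sub, map_mul]
  have hnF0 : Complex.normSq (1 - a w * conj (b w)) ≠ 0 := by
    simpa [Complex.normSq_eq_zero] using hFw
  have hnμ0 : Complex.normSq (μ w) ≠ 0 := by
    simpa [Complex.normSq_eq_zero] using hμw
  -- rewrite the RHS denominator as a real number
  have hden : (μ w * conj (μ w)) * (1 - a w * conj (b w)) ^ 3 * (1 - conj (a w) * b w) ^ 3
      = ((Complex.normSq (μ w) * Complex.normSq (1 - a w * conj (b w)) ^ 3 : ℝ) : ℂ) := by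
    rw [← hconjF]
    push_cast
    rw [← Complex.mul_conj, ← Complex.mul_conj]
    ring
  rw [hden, ← hconjF]
  rw [show ((((deriv a w * conj (deriv b w) * (conj (1 - a w * conj (b w))) ^ 2).re : ℝ)) : ℂ)
        / ((Complex.normSq (μ w) * Complex.normSq (1 - a w * conj (b w)) ^ 3 : ℝ) : ℂ)
      = (((deriv a w * conj (deriv b w) * (conj (1 - a w * conj (b w))) ^ 2).re
          / (Complex.normSq (μ w) * Complex.normSq (1 - a w * conj (b w)) ^ 3) : ℝ) : ℂ) from
    (Complex.ofReal_div _ _).symm]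
  congr 1
  -- now a purely real identity
  rw [hK w, hL, hlamsq w]
  have h1 : (-(4:ℂ) * deriv a w * conj (deriv b w) / (1 - a w * conj (b w)) ^ 2)
      = ((-4 : ℝ) : ℂ) * (deriv a w * conj (deriv b w) * (conj (1 - a w * conj (b w))) ^ 2)
        / ((Complex.normSq (1 - a w * conj (b w)) ^ 2 : ℝ) : ℂ) := by
    rw [div_eq_div_iff (pow_ne_zero 2 hFw) (by exact_mod_cast pow_ne_zero 2 hnF0)]
    push_cast
    rw [← Complex.mul_conj]
    ring
  rw [h1, mul_div_assoc, Complex.re_ofReal_mul, Complex.div_ofReal_re]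
  rw [Complex.sq_norm, Complex.sq_norm]
  field_simp
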